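/- arXiv:2410.06969 — 5 statements merged into one kernel-verified Lean document; each statement's English description precedes it below -/
import Mathlib

section
/- Assume w(e) = 1 for every hyperedge e ∈ E (unit weights, so d(u) = |{e ∈ E : u ∈ e}|). For every complex vector x = a + i·b ∈ ℂ^E with a, b ∈ ℝ^E, the quadratic form x* 𝕃_N x equals (1/2) Σ_{u ∈ V} (1/d(u)) Σ_{i,j ∈ E} [ ((a_i/√δ(i) − a_j/√δ(j))² + (b_i/√δ(i) − b_j/√δ(j))²)·𝟙[u ∈ H(i)∩H(j) or u ∈ T(i)∩T(j)] + ((a_i/√δ(i) − b_j/√δ(j))² + (a_j/√δ(j) + b_i/√δ(i))²)·𝟙[u ∈ H(i)∩T(j)] + ((a_i/√δ(i) + b_j/√δ(j))² + (a_j/√δ(j) − b_i/√δ(i))²)·𝟙[u ∈ T(i)∩H(j)] ], where 𝟙 denotes the indicator function. -/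
open Matrix Finset

variable {V E : Type*}

/-- The complex incidence matrix of a directed hypergraph with head sets `Hd` and
tail sets `Tl`: `1` on heads, `-i` on tails, `0` otherwise. -/
noncomputable def incB [DecidableEq V] (Hd Tl : E → Finset V) : Matrix V E ℂ :=
  Matrix.of fun v e => if v ∈ Hd e then 1 else if v ∈ Tl e then -Complex.I else 0

/-- The (weighted) degree of a vertex: sum of the weights of the hyperedges containing it. -/
noncomputable def vdeg [Fintype E] [DecidableEq V] (Hd Tl : E → Finset V) (w : E → ℝ)
    (u : V) : ℝ :=
  ∑ e ∈ Finset.univ.filter (fun e => u ∈ Hd e ∪ Tl e), w e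

/-- The degree (cardinality) of a hyperedge. -/
def edeg [DecidableEq V] (Hd Tl : E → Finset V) (e : E) : ℕ :=
  (Hd e ∪ Tl e).card

/-- The normalized Signless Directed Line-Graph Laplacian
`Q̄_N = D_e^{-1/2} W^{1/2} B* D_v^{-1} B W^{1/2} D_e^{-1/2}`. -/
noncomputable def QN [Fintype V] [Fintype E] [DecidableEq V] [DecidableEq E]
    (Hd Tl : E → Finset V) (w : E → ℝ) : Matrix E E ℂ :=
  Matrix.diagonal (fun e => (((Real.sqrt (edeg Hd Tl e : ℝ))⁻¹ : ℝ) : ℂ)) *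
    Matrix.diagonal (fun e => ((Real.sqrt (w e) : ℝ) : ℂ)) * (incB Hd Tl)ᴴ *
    Matrix.diagonal (fun u => (((vdeg Hd Tl w u)⁻¹ : ℝ) : ℂ)) * incB Hd Tl *
    Matrix.diagonal (fun e => ((Real.sqrt (w e) : ℝ) : ℂ)) *
    Matrix.diagonal (fun e => (((Real.sqrt (edeg Hd Tl e : ℝ))⁻¹ : ℝ) : ℂ))

/-- The Directed Line Graph Laplacian `𝕃_N = I - Q̄_N`. -/
noncomputable def LN [Fintype V] [Fintype E] [DecidableEq V] [DecidableEq E]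
    (Hd Tl : E → Finset V) (w : E → ℝ) : Matrix E E ℂ :=
  1 - QN Hd Tl w

/-- Auxiliary: standard expansion of the double sum of `normSq` of differences. -/
lemma key_expand {E : Type*} (S : Finset E) (z : E → ℂ) :
    ∑ i ∈ S, ∑ j ∈ S, Complex.normSq (z i - z j)
      = 2 * S.card * (∑ i ∈ S, Complex.normSq (z i)) - 2 * Complex.normSq (∑ i ∈ S, z i) := by
  have h2 : Complex.normSq (∑ i ∈ S, z i)
      = ∑ i ∈ S, ∑ j ∈ S, (z i * (starRingEnd ℂ) (z j)).re := by
    have h := Complex.mul_conj (∑ i ∈ S, z i)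
    have h3 : ((∑ i ∈ S, z i) * (starRingEnd ℂ) (∑ i ∈ S, z i)).re
        = Complex.normSq (∑ i ∈ S, z i) := by rw [h]; simp
    rw [← h3, map_sum, Finset.sum_mul_sum]
    simp [Complex.re_sum]
  simp_rw [Complex.normSq_sub]
  rw [Finset.sum_comm (f := fun i j => Complex.normSq (z i) + Complex.normSq (z j)
    - 2 * (z i * (starRingEnd ℂ) (z j)).re)]
  simp only [Finset.sum_sub_distrib, Finset.sum_add_distrib, Finset.sum_const, nsmul_eq_mul,
    ← Finset.mul_sum]
  rw [h2]
  have h4 : ∑ x ∈ S, ∑ y ∈ S, (z y * (starRingEnd ℂ) (z x)).re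
      = ∑ i ∈ S, ∑ j ∈ S, (z i * (starRingEnd ℂ) (z j)).re := Finset.sum_comm
  rw [h4]
  ring

/-- Auxiliary: entries of `QN` with unit weights. -/
lemma QN_apply_unit [Fintype V] [Fintype E] [DecidableEq V] [DecidableEq E]
    (Hd Tl : E → Finset V) (i j : E) :
    QN Hd Tl (fun _ => (1:ℝ)) i j
      = ((Real.sqrt (edeg Hd Tl i : ℝ))⁻¹ : ℂ) * ((Real.sqrt (edeg Hd Tl j : ℝ))⁻¹ : ℂ) *
        ∑ u : V, (((vdeg Hd Tl (fun _ => (1:ℝ)) u)⁻¹ : ℝ) : ℂ) *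
          ((starRingEnd ℂ) (incB Hd Tl u i) * incB Hd Tl u j) := by
  simp only [QN, Real.sqrt_one, Complex.ofReal_one, Matrix.mul_apply, Matrix.diagonal_apply,
    Matrix.conjTranspose_apply, mul_ite, ite_mul, one_mul, mul_one, zero_mul, mul_zero,
    Finset.sum_ite_eq, Finset.sum_ite_eq', Finset.mem_univ, if_true]
  rw [Finset.sum_mul, Finset.mul_sum]
  apply Finset.sum_congr rfl
  intro u _
  simp only [Complex.star_def, Complex.ofReal_inv]
  ring

/-- The quadratic form (Dirichlet energy) of `𝕃_N` with unit weights, for a complex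
signal `x = a + i b`. -/
theorem stmt1 {V E : Type*} [Fintype V] [Fintype E] [DecidableEq V] [DecidableEq E]
    (Hd Tl : E → Finset V)
    (hdisj : ∀ e, Disjoint (Hd e) (Tl e))
    (hne : ∀ e, (Hd e ∪ Tl e).Nonempty)
    (hd : ∀ u, 0 < vdeg Hd Tl (fun _ => (1 : ℝ)) u)
    (a b : E → ℝ) :
    star (fun e => (a e : ℂ) + (b e : ℂ) * Complex.I) ⬝ᵥ
        (LN Hd Tl (fun _ => (1 : ℝ)) *ᵥ fun e => (a e : ℂ) + (b e : ℂ) * Complex.I) =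
      (((1 / 2 : ℝ) * ∑ u : V, (1 / vdeg Hd Tl (fun _ => (1 : ℝ)) u) * ∑ i : E, ∑ j : E,
        ((if u ∈ Hd i ∩ Hd j ∨ u ∈ Tl i ∩ Tl j then
            (a i / Real.sqrt (edeg Hd Tl i : ℝ) - a j / Real.sqrt (edeg Hd Tl j : ℝ)) ^ 2 +
              (b i / Real.sqrt (edeg Hd Tl i : ℝ) - b j / Real.sqrt (edeg Hd Tl j : ℝ)) ^ 2
          else 0) +
        (if u ∈ Hd i ∩ Tl j then
            (a i / Real.sqrt (edeg Hd Tl i : ℝ) - b j / Real.sqrt (edeg Hd Tl j : ℝ)) ^ 2 +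
              (a j / Real.sqrt (edeg Hd Tl j : ℝ) + b i / Real.sqrt (edeg Hd Tl i : ℝ)) ^ 2
          else 0) +
        (if u ∈ Tl i ∩ Hd j then
            (a i / Real.sqrt (edeg Hd Tl i : ℝ) + b j / Real.sqrt (edeg Hd Tl j : ℝ)) ^ 2 +
              (a j / Real.sqrt (edeg Hd Tl j : ℝ) - b i / Real.sqrt (edeg Hd Tl i : ℝ)) ^ 2
          else 0)) : ℝ) : ℂ) := by
  classical
  set s : E → ℝ := fun e => (Real.sqrt (edeg Hd Tl e : ℝ))⁻¹ with hs
  set x : E → ℂ := fun e => (a e : ℂ) + (b e : ℂ) * Complex.I with hx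
  set d : V → ℝ := vdeg Hd Tl (fun _ => (1:ℝ)) with hdd
  set z : V → E → ℂ := fun u e => incB Hd Tl u e * ((s e : ℂ) * x e) with hz
  set g : V → ℂ := fun u => ∑ e, z u e with hg
  -- basic facts
  have hB0 : ∀ u e, u ∉ Hd e ∪ Tl e → incB Hd Tl u e = 0 := by
    intro u e h
    simp only [Finset.mem_union, not_or] at h
    simp [incB, h.1, h.2]
  have hz0 : ∀ u e, u ∉ Hd e ∪ Tl e → z u e = 0 := by
    intro u e h; simp [hz, hB0 u e h]
  have hd0 : ∀ u, d u = ((Finset.univ.filter (fun e => u ∈ Hd e ∪ Tl e)).card : ℝ) := by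
    intro u; simp [hdd, vdeg]
  have hdne : ∀ u, d u ≠ 0 := fun u => ne_of_gt (hd u)
  -- LHS computation
  have lhs_tri : star x ⬝ᵥ (QN Hd Tl (fun _ => (1:ℝ)) *ᵥ x)
      = ∑ i, ∑ j, ∑ u, (((d u)⁻¹ : ℝ) : ℂ) * ((starRingEnd ℂ) (z u i) * z u j) := by
    simp only [dotProduct, Matrix.mulVec]
    apply Finset.sum_congr rfl
    intro i _
    rw [Finset.mul_sum]
    apply Finset.sum_congr rfl
    intro j _
    rw [QN_apply_unit]
    simp only [← hdd, Finset.mul_sum, Finset.sum_mul]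
    apply Finset.sum_congr rfl
    intro u _
    simp only [hz, hs, Pi.star_apply, Complex.star_def, _root_.map_mul, Complex.conj_ofReal,
      Complex.ofReal_inv, map_inv₀]
    ring
  have swap3 : ∀ (F : V → E → E → ℂ), (∑ i : E, ∑ j : E, ∑ u : V, F u i j)
      = ∑ u : V, ∑ i : E, ∑ j : E, F u i j := by
    intro F
    calc (∑ i : E, ∑ j : E, ∑ u : V, F u i j)
        = ∑ i : E, ∑ u : V, ∑ j : E, F u i j :=
          Finset.sum_congr rfl (fun i _ => Finset.sum_comm)
      _ = ∑ u : V, ∑ i : E, ∑ j : E, F u i j := Finset.sum_comm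
  have rhs_tri : ∀ u, (((d u)⁻¹ : ℝ) : ℂ) * ((Complex.normSq (g u) : ℝ) : ℂ)
      = ∑ i, ∑ j, (((d u)⁻¹ : ℝ) : ℂ) * ((starRingEnd ℂ) (z u i) * z u j) := by
    intro u
    have hns : ((Complex.normSq (g u) : ℝ) : ℂ) = (starRingEnd ℂ) (g u) * g u := by
      rw [← Complex.mul_conj (g u)]; ring
    rw [hns]
    simp only [hg]
    rw [map_sum, Finset.sum_mul_sum]
    simp only [Finset.mul_sum]
  have hq : star x ⬝ᵥ (QN Hd Tl (fun _ => (1:ℝ)) *ᵥ x)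
      = ∑ u, (((d u)⁻¹ : ℝ) : ℂ) * ((Complex.normSq (g u) : ℝ) : ℂ) := by
    rw [lhs_tri, swap3]
    exact Finset.sum_congr rfl (fun u _ => (rhs_tri u).symm)
  have hLHS : star x ⬝ᵥ (LN Hd Tl (fun _ => (1:ℝ)) *ᵥ x)
      = (∑ e, ((Complex.normSq (x e) : ℝ) : ℂ))
        - ∑ u, (((d u)⁻¹ : ℝ) : ℂ) * ((Complex.normSq (g u) : ℝ) : ℂ) := by
    rw [LN, Matrix.sub_mulVec, Matrix.one_mulVec, dotProduct_sub, hq]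
    congr 1
    simp only [dotProduct]
    apply Finset.sum_congr rfl
    intro e _
    rw [Pi.star_apply, Complex.star_def, mul_comm, Complex.mul_conj]
  -- pointwise identification of the summand
  have hT : ∀ (u : V) (i j : E),
      ((if u ∈ Hd i ∩ Hd j ∨ u ∈ Tl i ∩ Tl j then
          (a i / Real.sqrt (edeg Hd Tl i : ℝ) - a j / Real.sqrt (edeg Hd Tl j : ℝ)) ^ 2 +
            (b i / Real.sqrt (edeg Hd Tl i : ℝ) - b j / Real.sqrt (edeg Hd Tl j : ℝ)) ^ 2
        else 0) +
      (if u ∈ Hd i ∩ Tl j then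
          (a i / Real.sqrt (edeg Hd Tl i : ℝ) - b j / Real.sqrt (edeg Hd Tl j : ℝ)) ^ 2 +
            (a j / Real.sqrt (edeg Hd Tl j : ℝ) + b i / Real.sqrt (edeg Hd Tl i : ℝ)) ^ 2
        else 0) +
      (if u ∈ Tl i ∩ Hd j then
          (a i / Real.sqrt (edeg Hd Tl i : ℝ) + b j / Real.sqrt (edeg Hd Tl j : ℝ)) ^ 2 +
            (a j / Real.sqrt (edeg Hd Tl j : ℝ) - b i / Real.sqrt (edeg Hd Tl i : ℝ)) ^ 2
        else 0))
      = (if u ∈ Hd i ∪ Tl i then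
          (if u ∈ Hd j ∪ Tl j then Complex.normSq (z u i - z u j) else 0) else 0) := by
    intro u i j
    have hdi := Finset.disjoint_left.mp (hdisj i)
    have hdj := Finset.disjoint_left.mp (hdisj j)
    by_cases hi1 : u ∈ Hd i
    · have hi2 : u ∉ Tl i := hdi hi1
      by_cases hj1 : u ∈ Hd j
      · have hj2 : u ∉ Tl j := hdj hj1
        have hzz : z u i - z u j
            = ((s i * a i - s j * a j : ℝ) : ℂ) + ((s i * b i - s j * b j : ℝ) : ℂ) * Complex.I := by
          simp only [hz, hx, incB, Matrix.of_apply, if_pos hi1, if_pos hj1]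
          push_cast
          ring
        simp only [Finset.mem_inter, Finset.mem_union, hi1, hi2, hj1, hj2, true_and, and_true,
          and_false, false_and, if_true, if_false, or_false, false_or, or_true, true_or,
          true_iff, not_false_iff, add_zero, zero_add, if_neg, not_false_eq_true]
        rw [hzz, Complex.normSq_add_mul_I]
        simp only [hs, div_eq_mul_inv]
        ring
      · by_cases hj2 : u ∈ Tl j
        · have hzz : z u i - z u j
              = ((s i * a i - s j * b j : ℝ) : ℂ) + ((s i * b i + s j * a j : ℝ) : ℂ) * Complex.I := by
            simp only [hz, hx, incB, Matrix.of_apply, if_pos hi1, if_neg hj1, if_pos hj2]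
            push_cast
            linear_combination ((s j : ℂ) * (b j : ℂ)) * Complex.I_sq
          simp only [Finset.mem_inter, Finset.mem_union, hi1, hi2, hj1, hj2, true_and, and_true,
            and_false, false_and, if_true, if_false, or_false, false_or, or_true, true_or,
            true_iff, not_false_iff, add_zero, zero_add, if_neg, not_false_eq_true]
          rw [hzz, Complex.normSq_add_mul_I]
          simp only [hs, div_eq_mul_inv]
          ring
        · simp [hi1, hi2, hj1, hj2]
    · by_cases hi2 : u ∈ Tl i
      · by_cases hj1 : u ∈ Hd j
        · have hj2 : u ∉ Tl j := hdj hj1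
          have hzz : z u i - z u j
              = ((s i * b i - s j * a j : ℝ) : ℂ)
                + ((-(s i * a i) - s j * b j : ℝ) : ℂ) * Complex.I := by
            simp only [hz, hx, incB, Matrix.of_apply, if_neg hi1, if_pos hi2, if_pos hj1]
            push_cast
            linear_combination (-((s i : ℂ) * (b i : ℂ))) * Complex.I_sq
          simp only [Finset.mem_inter, Finset.mem_union, hi1, hi2, hj1, hj2, true_and, and_true,
            and_false, false_and, if_true, if_false, or_false, false_or, or_true, true_or,
            true_iff, not_false_iff, add_zero, zero_add, if_neg, not_false_eq_true]
          rw [hzz, Complex.normSq_add_mul_I]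
          simp only [hs, div_eq_mul_inv]
          ring
        · by_cases hj2 : u ∈ Tl j
          · have hzz : z u i - z u j
                = ((s i * b i - s j * b j : ℝ) : ℂ)
                  + ((-(s i * a i) + s j * a j : ℝ) : ℂ) * Complex.I := by
              simp only [hz, hx, incB, Matrix.of_apply, if_neg hi1, if_pos hi2, if_neg hj1,
                if_pos hj2]
              push_cast
              linear_combination (-((s i : ℂ) * (b i : ℂ) - (s j : ℂ) * (b j : ℂ))) * Complex.I_sq
            simp only [Finset.mem_inter, Finset.mem_union, hi1, hi2, hj1, hj2, true_and, and_true,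
              and_false, false_and, if_true, if_false, or_false, false_or, or_true, true_or,
              true_iff, not_false_iff, add_zero, zero_add, if_neg, not_false_eq_true]
            rw [hzz, Complex.normSq_add_mul_I]
            simp only [hs, div_eq_mul_inv]
            ring
          · simp [hi1, hi2, hj1, hj2]
      · simp [hi1, hi2]
  -- the filtered edge set at a vertex
  set Su : V → Finset E := fun u => Finset.univ.filter (fun e => u ∈ Hd e ∪ Tl e) with hSu
  have hgu : ∀ u, ∑ e ∈ Su u, z u e = g u := by
    intro u
    simp only [hSu, hg]
    rw [Finset.sum_filter]
    apply Finset.sum_congr rfl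
    intro e _
    by_cases h : u ∈ Hd e ∪ Tl e
    · simp [h]
    · simp [h, hz0 u e h]
  have hcardSu : ∀ u, ((Su u).card : ℝ) = d u := by
    intro u
    rw [hd0 u]
  have step : ∀ u, (∑ i ∈ Su u, ∑ j ∈ Su u, Complex.normSq (z u i - z u j))
      = ∑ i : E, ∑ j : E, (if u ∈ Hd i ∪ Tl i then
          (if u ∈ Hd j ∪ Tl j then Complex.normSq (z u i - z u j) else 0) else 0) := by
    intro u
    simp only [hSu]
    rw [Finset.sum_filter]
    apply Finset.sum_congr rfl
    intro i _
    by_cases hp : u ∈ Hd i ∪ Tl i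
    · simp only [hp, if_true, Finset.sum_filter]
    · simp [hp]
  have hstep : ∀ u : V, (∑ i : E, ∑ j : E, (if u ∈ Hd i ∪ Tl i then
        (if u ∈ Hd j ∪ Tl j then Complex.normSq (z u i - z u j) else 0) else 0))
      = 2 * d u * (∑ e ∈ Su u, Complex.normSq (z u e)) - 2 * Complex.normSq (g u) := by
    intro u
    rw [← step u, key_expand, hgu u, hcardSu u]
  -- the total first term
  have hA : (∑ u : V, ∑ e ∈ Su u, Complex.normSq (z u e)) = ∑ e : E, Complex.normSq (x e) := by
    have h1 : ∀ u, (∑ e ∈ Su u, Complex.normSq (z u e))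
        = ∑ e : E, (if u ∈ Hd e ∪ Tl e then (s e) ^ 2 * Complex.normSq (x e) else 0) := by
      intro u
      simp only [hSu]
      rw [Finset.sum_filter]
      apply Finset.sum_congr rfl
      intro e _
      by_cases h : u ∈ Hd e ∪ Tl e
      · simp only [h, if_true]
        simp only [hz]
        rw [Complex.normSq_mul, Complex.normSq_mul, Complex.normSq_ofReal]
        have hB1 : Complex.normSq (incB Hd Tl u e) = 1 := by
          by_cases h2 : u ∈ Hd e
          · simp [incB, h2]
          · have h1' : u ∈ Tl e := by
              rcases Finset.mem_union.mp h with hh | hh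
              · exact absurd hh h2
              · exact hh
            simp [incB, h2, h1']
        rw [hB1]
        ring
      · simp [h]
    simp_rw [h1]
    rw [Finset.sum_comm]
    apply Finset.sum_congr rfl
    intro e _
    rw [← Finset.sum_filter, Finset.sum_const]
    have hcard : (Finset.univ.filter (fun u => u ∈ Hd e ∪ Tl e)).card = edeg Hd Tl e := by
      rw [Finset.filter_univ_mem]
      rfl
    rw [hcard, nsmul_eq_mul]
    have hδ : (0 : ℝ) < (edeg Hd Tl e : ℝ) := by
      have hc : 0 < edeg Hd Tl e := Finset.card_pos.mpr (hne e)
      exact_mod_cast hc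
    have hsq : (s e) ^ 2 = ((edeg Hd Tl e : ℝ))⁻¹ := by
      simp only [hs]
      rw [inv_pow, Real.sq_sqrt hδ.le]
    rw [hsq]
    field_simp
  -- total real identity
  have hfinal : (1 / 2 : ℝ) * ∑ u : V, (1 / d u) * ∑ i : E, ∑ j : E,
        (if u ∈ Hd i ∪ Tl i then
          (if u ∈ Hd j ∪ Tl j then Complex.normSq (z u i - z u j) else 0) else 0)
      = (∑ e : E, Complex.normSq (x e)) - ∑ u : V, (d u)⁻¹ * Complex.normSq (g u) := by
    simp_rw [hstep]
    rw [Finset.mul_sum, ← hA, ← Finset.sum_sub_distrib]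
    apply Finset.sum_congr rfl
    intro u _
    have h := hdne u
    field_simp
  rw [hLHS]
  simp_rw [hT]
  rw [hfinal]
  push_cast
  ring
end

section
/- The Directed Line Graph Laplacian 𝕃_N is positive semidefinite: 𝕃_N is Hermitian and for every x ∈ ℂ^E the quadratic form x* 𝕃_N x is a nonnegative real number. -/
open Matrix Finset

variable {V E : Type*}

/-- auxiliary: the "square root" matrix `S = D_v^{-1/2} B W^{1/2} D_e^{-1/2}`. -/
noncomputable def sMat [Fintype E] [DecidableEq V] (Hd Tl : E → Finset V) (w : E → ℝ) :
    Matrix V E ℂ :=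
  Matrix.of fun v e =>
    ((((Real.sqrt (vdeg Hd Tl w v))⁻¹ * (Real.sqrt (w e) *
      (Real.sqrt (edeg Hd Tl e : ℝ))⁻¹)) : ℝ) : ℂ) * incB Hd Tl v e

lemma QN_eq_conj [Fintype V] [Fintype E] [DecidableEq V] [DecidableEq E]
    (Hd Tl : E → Finset V) (w : E → ℝ) (hd : ∀ u, 0 < vdeg Hd Tl w u) :
    QN Hd Tl w = (sMat Hd Tl w)ᴴ * sMat Hd Tl w := by
  ext e f
  simp only [QN, sMat, Matrix.mul_apply, Matrix.diagonal_apply, Matrix.conjTranspose_apply,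
    Matrix.of_apply, mul_ite, ite_mul, mul_zero, zero_mul, Finset.sum_ite_eq,
    Finset.sum_ite_eq', Finset.mem_univ, if_true]
  rw [Finset.sum_mul, Finset.sum_mul]
  refine Finset.sum_congr rfl fun v _ => ?_
  have hv : ((Real.sqrt (vdeg Hd Tl w v) : ℝ) : ℂ) * ((Real.sqrt (vdeg Hd Tl w v) : ℝ) : ℂ)
      = ((vdeg Hd Tl w v : ℝ) : ℂ) := by
    rw [← Complex.ofReal_mul, Real.mul_self_sqrt (hd v).le]
  simp only [star_mul', Complex.star_def, Complex.conj_ofReal]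
  push_cast
  rw [← hv]
  ring

lemma abs_incB [DecidableEq V] (Hd Tl : E → Finset V) (v : V) (e : E) :
    ‖incB Hd Tl v e‖ = if v ∈ Hd e ∪ Tl e then 1 else 0 := by
  simp only [incB, Matrix.of_apply, Finset.mem_union]
  split_ifs with h1 h2 h3 h4 <;> simp_all

lemma normSq_sMat_mulVec_le [Fintype V] [Fintype E] [DecidableEq V] [DecidableEq E]
    (Hd Tl : E → Finset V) (w : E → ℝ) (hw : ∀ e, 0 < w e)
    (hd : ∀ u, 0 < vdeg Hd Tl w u) (x : E → ℂ) (v : V) :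
    Complex.normSq ((sMat Hd Tl w *ᵥ x) v) ≤
      ∑ e, (if v ∈ Hd e ∪ Tl e then ((edeg Hd Tl e : ℝ))⁻¹ * Complex.normSq (x e) else 0) := by
  set f : E → ℝ := fun e =>
    if v ∈ Hd e ∪ Tl e then (Real.sqrt (vdeg Hd Tl w v))⁻¹ * Real.sqrt (w e) else 0 with hf
  set g : E → ℝ := fun e =>
    if v ∈ Hd e ∪ Tl e then (Real.sqrt (edeg Hd Tl e : ℝ))⁻¹ * ‖x e‖ else 0 with hg
  have h1 : ‖(sMat Hd Tl w *ᵥ x) v‖ ≤ ∑ e, f e * g e := by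
    rw [show (sMat Hd Tl w *ᵥ x) v = ∑ e, sMat Hd Tl w v e * x e by
      simp [Matrix.mulVec, dotProduct]]
    refine le_trans (norm_sum_le _ _)
      (le_of_eq (Finset.sum_congr rfl fun e _ => ?_))
    simp only [sMat, Matrix.of_apply, hf, hg]
    by_cases h : v ∈ Hd e ∪ Tl e
    · rw [norm_mul, norm_mul, Complex.norm_real, Real.norm_eq_abs, abs_incB,
        if_pos h, if_pos h, if_pos h, abs_of_nonneg (by positivity)]
      ring
    · have hz : incB Hd Tl v e = 0 := by
        rw [Finset.mem_union, not_or] at h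
        simp [incB, h.1, h.2]
      rw [Finset.mem_union] at h
      simp [hz, if_neg h]
  have hsf : ∑ e, f e ^ 2 = 1 := by
    have : ∀ e, f e ^ 2 = if v ∈ Hd e ∪ Tl e then (vdeg Hd Tl w v)⁻¹ * w e else 0 := by
      intro e; simp only [hf]; split_ifs with h
      · rw [mul_pow, ← Real.sqrt_inv, Real.sq_sqrt (inv_nonneg.mpr (hd v).le),
          Real.sq_sqrt (hw e).le]
      · simp
    simp only [this]
    rw [← Finset.sum_filter, ← Finset.mul_sum]
    exact inv_mul_cancel₀ (hd v).ne'
  have hsg : ∑ e, g e ^ 2 =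
      ∑ e, (if v ∈ Hd e ∪ Tl e then ((edeg Hd Tl e : ℝ))⁻¹ * Complex.normSq (x e) else 0) := by
    refine Finset.sum_congr rfl fun e _ => ?_
    simp only [hg]; split_ifs with h
    · rw [mul_pow, ← Real.sqrt_inv, Real.sq_sqrt (by positivity), Complex.sq_norm]
    · simp
  calc Complex.normSq ((sMat Hd Tl w *ᵥ x) v)
      = ‖(sMat Hd Tl w *ᵥ x) v‖ ^ 2 := (Complex.sq_norm _).symm
    _ ≤ (∑ e, f e * g e) ^ 2 := by
        exact pow_le_pow_left₀ (norm_nonneg _) h1 2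
    _ ≤ (∑ e, f e ^ 2) * ∑ e, g e ^ 2 := Finset.sum_mul_sq_le_sq_mul_sq _ _ _
    _ = _ := by rw [hsf, hsg, one_mul]


/-- The Directed Line Graph Laplacian `𝕃_N` is positive semidefinite: it is Hermitian
and every quadratic form `x* 𝕃_N x` is a nonnegative real number. -/
theorem stmt2 {V E : Type*} [Fintype V] [Fintype E] [DecidableEq V] [DecidableEq E]
    (Hd Tl : E → Finset V)
    (hdisj : ∀ e, Disjoint (Hd e) (Tl e))
    (hne : ∀ e, (Hd e ∪ Tl e).Nonempty)
    (w : E → ℝ) (hw : ∀ e, 0 < w e)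
    (hd : ∀ u, 0 < vdeg Hd Tl w u) :
    (LN Hd Tl w).IsHermitian ∧
      ∀ x : E → ℂ, ∃ r : ℝ, 0 ≤ r ∧ star x ⬝ᵥ (LN Hd Tl w *ᵥ x) = (r : ℂ) := by
  have hQ := QN_eq_conj Hd Tl w hd
  constructor
  · rw [LN, hQ]
    exact Matrix.isHermitian_one.sub (Matrix.isHermitian_conjTranspose_mul_self _)
  · intro x
    have key2 : ∑ v, Complex.normSq ((sMat Hd Tl w *ᵥ x) v) ≤ ∑ e, Complex.normSq (x e) := by
      calc ∑ v, Complex.normSq ((sMat Hd Tl w *ᵥ x) v)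
          ≤ ∑ v, ∑ e, (if v ∈ Hd e ∪ Tl e then
              ((edeg Hd Tl e : ℝ))⁻¹ * Complex.normSq (x e) else 0) :=
            Finset.sum_le_sum fun v _ => normSq_sMat_mulVec_le Hd Tl w hw hd x v
        _ = ∑ e, ∑ v, (if v ∈ Hd e ∪ Tl e then
              ((edeg Hd Tl e : ℝ))⁻¹ * Complex.normSq (x e) else 0) := Finset.sum_comm
        _ = ∑ e, Complex.normSq (x e) := by
            refine Finset.sum_congr rfl fun e _ => ?_
            rw [Finset.sum_ite_mem, Finset.univ_inter, Finset.sum_const, nsmul_eq_mul,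
              edeg, ← mul_assoc, mul_inv_cancel₀, one_mul]
            exact_mod_cast (Finset.card_pos.mpr (hne e)).ne'
    refine ⟨∑ e, Complex.normSq (x e) - ∑ v, Complex.normSq ((sMat Hd Tl w *ᵥ x) v),
      by linarith, ?_⟩
    have h4 : star x ⬝ᵥ x = ((∑ e, Complex.normSq (x e) : ℝ) : ℂ) := by
      simp [dotProduct, ← Complex.normSq_eq_conj_mul_self, Complex.star_def]
    have h5 : star (sMat Hd Tl w *ᵥ x) ⬝ᵥ (sMat Hd Tl w *ᵥ x)
        = ((∑ v, Complex.normSq ((sMat Hd Tl w *ᵥ x) v) : ℝ) : ℂ) := by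
      simp [dotProduct, ← Complex.normSq_eq_conj_mul_self, Complex.star_def]
    rw [LN, hQ, Matrix.sub_mulVec, Matrix.one_mulVec, dotProduct_sub,
      ← Matrix.mulVec_mulVec, Matrix.dotProduct_mulVec, ← Matrix.star_mulVec, h4, h5]
    push_cast
    ring
end

section
/- Every eigenvalue of the Hermitian matrix 𝕃_N is at most 1; equivalently, the matrix I − 𝕃_N is positive semidefinite. -/
open Matrix Finset
open scoped ComplexOrder

variable {V E : Type*}

/-- Every eigenvalue of the Hermitian matrix `𝕃_N` is (a real number) at most 1;
equivalently, `I - 𝕃_N` is positive semidefinite. -/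
theorem stmt4 {V E : Type*} [Fintype V] [Fintype E] [DecidableEq V] [DecidableEq E]
    (Hd Tl : E → Finset V)
    (hdisj : ∀ e, Disjoint (Hd e) (Tl e))
    (hne : ∀ e, (Hd e ∪ Tl e).Nonempty)
    (w : E → ℝ) (hw : ∀ e, 0 < w e)
    (hd : ∀ u, 0 < vdeg Hd Tl w u) :
    (∀ μ ∈ spectrum ℂ (LN Hd Tl w), ∃ r : ℝ, μ = (r : ℂ) ∧ r ≤ 1) ∧
      ((1 : Matrix E E ℂ) - LN Hd Tl w).PosSemidef := by
  have hstar : ∀ (d : E → ℝ),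
      (Matrix.diagonal fun e => ((d e : ℝ) : ℂ))ᴴ = Matrix.diagonal fun e => ((d e : ℝ) : ℂ) := by
    intro d
    rw [Matrix.diagonal_conjTranspose]
    have : (star fun e => ((d e : ℝ) : ℂ)) = fun e => ((d e : ℝ) : ℂ) :=
      funext fun e => Complex.conj_ofReal _
    rw [this]
  have hQeq : QN Hd Tl w =
      (incB Hd Tl * Matrix.diagonal (fun e => ((Real.sqrt (w e) : ℝ) : ℂ)) *
          Matrix.diagonal (fun e => (((Real.sqrt (edeg Hd Tl e : ℝ))⁻¹ : ℝ) : ℂ)))ᴴ *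
        Matrix.diagonal (fun u => (((vdeg Hd Tl w u)⁻¹ : ℝ) : ℂ)) *
        (incB Hd Tl * Matrix.diagonal (fun e => ((Real.sqrt (w e) : ℝ) : ℂ)) *
          Matrix.diagonal (fun e => (((Real.sqrt (edeg Hd Tl e : ℝ))⁻¹ : ℝ) : ℂ))) := by
    rw [Matrix.conjTranspose_mul, Matrix.conjTranspose_mul,
      hstar (fun e => (Real.sqrt (w e) : ℝ)),
      hstar (fun e => ((Real.sqrt (edeg Hd Tl e : ℝ))⁻¹ : ℝ))]
    simp only [QN, Matrix.mul_assoc]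
  have hDv : (Matrix.diagonal (fun u => (((vdeg Hd Tl w u)⁻¹ : ℝ) : ℂ))).PosSemidef := by
    rw [Matrix.posSemidef_diagonal_iff]
    intro u
    have : (0:ℝ) ≤ (vdeg Hd Tl w u)⁻¹ := inv_nonneg.mpr (hd u).le
    rw [Complex.le_def]
    simpa using this
  have hQ : (QN Hd Tl w).PosSemidef := by
    rw [hQeq]; exact hDv.conjTranspose_mul_mul_same _
  have hsub : (1 : Matrix E E ℂ) - LN Hd Tl w = QN Hd Tl w := by
    simp [LN]
  refine ⟨?_, hsub ▸ hQ⟩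
  intro μ hμ
  rw [← AlgEquiv.spectrum_eq (Matrix.toLinAlgEquiv' (R := ℂ) (n := E)),
    ← Module.End.hasEigenvalue_iff_mem_spectrum] at hμ
  obtain ⟨v, hv⟩ := hμ.exists_hasEigenvector
  have hev : LN Hd Tl w *ᵥ v = μ • v := by
    have := hv.apply_eq_smul
    rwa [Matrix.toLinAlgEquiv'_apply] at this
  have hQv : QN Hd Tl w *ᵥ v = (1 - μ) • v := by
    have h1 : QN Hd Tl w = 1 - LN Hd Tl w := by simp [LN]
    rw [h1, Matrix.sub_mulVec, hev, Matrix.one_mulVec, sub_smul, one_smul]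
  have hpos := hQ.dotProduct_mulVec_nonneg v
  rw [hQv, dotProduct_smul, smul_eq_mul] at hpos
  set c : ℂ := star v ⬝ᵥ v with hc
  have hcpos : 0 < c := Matrix.dotProduct_star_self_pos_iff.mpr hv.2
  rw [Complex.lt_def] at hcpos
  have hcim : c.im = 0 := hcpos.2.symm
  have hcre : 0 < c.re := by simpa using hcpos.1
  rw [Complex.le_def] at hpos
  simp only [Complex.mul_re, Complex.mul_im, hcim, Complex.zero_re, Complex.zero_im,
    mul_zero, zero_mul, sub_zero, add_zero] at hpos
  obtain ⟨hre, him⟩ := hpos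
  have h2 : (1 - μ).im * c.re = 0 := by linarith
  have hμim : μ.im = 0 := by
    rcases mul_eq_zero.mp h2 with h | h
    · have : (1 - μ).im = 0 := h
      simpa [Complex.sub_im] using this
    · linarith
  have hμre : μ.re ≤ 1 := by
    have h1 : 0 ≤ (1 - μ).re := by
      by_contra h
      push_neg at h
      nlinarith
    simp only [Complex.sub_re, Complex.one_re] at h1
    linarith
  exact ⟨μ.re, by apply Complex.ext <;> simp [hμim], hμre⟩
end

section
/- Every eigenvalue of the Hermitian matrix Q̄_N is at most 1; equivalently, the matrix I − Q̄_N is positive semidefinite. -/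
open Matrix Finset
open scoped ComplexOrder

variable {V E : Type*}

private lemma star_dot_self {n : Type*} [Fintype n] (a : n → ℂ) :
    star a ⬝ᵥ a = ((∑ i, ‖a i‖ ^ 2 : ℝ) : ℂ) := by
  push_cast
  simp only [dotProduct, Pi.star_apply, Complex.star_def]
  exact Finset.sum_congr rfl fun i _ => by rw [Complex.conj_mul']

/-- Every eigenvalue of the Hermitian matrix `Q̄_N` is (a real number) at most 1;
equivalently, `I - Q̄_N` is positive semidefinite. -/
theorem stmt5 {V E : Type*} [Fintype V] [Fintype E] [DecidableEq V] [DecidableEq E]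
    (Hd Tl : E → Finset V)
    (hdisj : ∀ e, Disjoint (Hd e) (Tl e))
    (hne : ∀ e, (Hd e ∪ Tl e).Nonempty)
    (w : E → ℝ) (hw : ∀ e, 0 < w e)
    (hd : ∀ u, 0 < vdeg Hd Tl w u) :
    (∀ μ ∈ spectrum ℂ (QN Hd Tl w), ∃ r : ℝ, μ = (r : ℂ) ∧ r ≤ 1) ∧
      ((1 : Matrix E E ℂ) - QN Hd Tl w).PosSemidef := by
  classical
  set c : E → ℝ := fun e => Real.sqrt (w e) * (Real.sqrt (edeg Hd Tl e : ℝ))⁻¹ with hcdef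
  set sd : V → ℝ := fun v => (Real.sqrt (vdeg Hd Tl w v))⁻¹ with hsddef
  set A : Matrix V E ℂ := Matrix.of (fun v e => ((sd v : ℂ) * (incB Hd Tl v e * (c e : ℂ)))) with hAdef
  -- B vanishes off the supporting vertex set
  have hB0 : ∀ v e, v ∉ Hd e ∪ Tl e → incB Hd Tl v e = 0 := by
    intro v e hv
    rw [Finset.mem_union] at hv
    push_neg at hv
    simp [incB, hv.1, hv.2]
  have hB1 : ∀ v e, v ∈ Hd e ∪ Tl e → ‖incB Hd Tl v e‖ = 1 := by
    intro v e hv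
    rw [Finset.mem_union] at hv
    rcases hv with h | h
    · simp [incB, h]
    · have h' : v ∉ Hd e := fun hh => (hdisj e).forall_ne_finset hh h rfl
      simp [incB, h, h']
  -- factorization QN = Aᴴ * A
  have hfact : QN Hd Tl w = Aᴴ * A := by
    ext e f
    conv_rhs => rw [Matrix.mul_apply]
    unfold QN
    simp only [Matrix.diagonal_mul_diagonal, Matrix.mul_diagonal]
    rw [Matrix.mul_apply, Finset.sum_mul, Finset.sum_mul]
    refine Finset.sum_congr rfl fun v _ => ?_
    simp only [Matrix.mul_diagonal, Matrix.diagonal_mul, Matrix.conjTranspose_apply,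
      hAdef, Matrix.of_apply, Complex.star_def, _root_.map_mul, Complex.conj_ofReal]
    have h1 : ((sd v : ℝ) : ℂ) * ((sd v : ℝ) : ℂ) = (((vdeg Hd Tl w v)⁻¹ : ℝ) : ℂ) := by
      rw [← Complex.ofReal_mul, hsddef, ← mul_inv, Real.mul_self_sqrt (hd v).le]
    have h2 : ∀ g, ((c g : ℝ) : ℂ) =
        ((Real.sqrt (w g) : ℝ) : ℂ) * (((Real.sqrt (edeg Hd Tl g : ℝ))⁻¹ : ℝ) : ℂ) := by
      intro g; rw [hcdef]; push_cast; ring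
    rw [h2 e, h2 f]
    linear_combination (-(starRingEnd ℂ) (incB Hd Tl v e) * incB Hd Tl v f *
      (((Real.sqrt (w e) : ℝ) : ℂ) * (((Real.sqrt (edeg Hd Tl e : ℝ))⁻¹ : ℝ) : ℂ)) *
      (((Real.sqrt (w f) : ℝ) : ℂ) * (((Real.sqrt (edeg Hd Tl f : ℝ))⁻¹ : ℝ) : ℂ))) * h1
  -- the key quadratic inequality
  have key : ∀ x : E → ℂ, ∑ v, ‖(A *ᵥ x) v‖ ^ 2 ≤ ∑ e, ‖x e‖ ^ 2 := by
    intro x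
    have hstep : ∀ v, ‖(A *ᵥ x) v‖ ^ 2 ≤
        ∑ e ∈ Finset.univ.filter (fun e => v ∈ Hd e ∪ Tl e),
          ((edeg Hd Tl e : ℝ))⁻¹ * ‖x e‖ ^ 2 := by
      intro v
      set Fv := Finset.univ.filter (fun e => v ∈ Hd e ∪ Tl e) with hFv
      have hyv : (A *ᵥ x) v = (sd v : ℂ) * ∑ e ∈ Fv, incB Hd Tl v e * ((c e : ℂ) * x e) := by
        rw [Matrix.mulVec, dotProduct, Finset.mul_sum]
        rw [Finset.sum_filter_of_ne (fun e _ he => ?_)]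
        · exact Finset.sum_congr rfl fun e _ => by simp [hAdef]; ring
        · by_contra hv
          exact he (by rw [hB0 v e hv]; ring)
      have hsd0 : 0 ≤ sd v := inv_nonneg.2 (Real.sqrt_nonneg _)
      have hnorm : ‖(A *ᵥ x) v‖ ≤ sd v * ∑ e ∈ Fv, c e * ‖x e‖ := by
        rw [hyv, norm_mul, Complex.norm_real, Real.norm_eq_abs, abs_of_nonneg hsd0]
        refine mul_le_mul_of_nonneg_left ?_ hsd0
        refine (norm_sum_le _ _).trans (le_of_eq (Finset.sum_congr rfl fun e he => ?_))
        rw [norm_mul, norm_mul, hB1 v e (Finset.mem_filter.1 he).2, one_mul,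
          Complex.norm_real, Real.norm_eq_abs, abs_of_nonneg (mul_nonneg (Real.sqrt_nonneg _)
            (inv_nonneg.2 (Real.sqrt_nonneg _)))]
      have hCS : (∑ e ∈ Fv, c e * ‖x e‖) ^ 2 ≤
          (vdeg Hd Tl w v) * ∑ e ∈ Fv, ((edeg Hd Tl e : ℝ))⁻¹ * ‖x e‖ ^ 2 := by
        have := Finset.sum_mul_sq_le_sq_mul_sq Fv (fun e => Real.sqrt (w e))
          (fun e => (Real.sqrt (edeg Hd Tl e : ℝ))⁻¹ * ‖x e‖)
        have heq : ∀ e, Real.sqrt (w e) * ((Real.sqrt (edeg Hd Tl e : ℝ))⁻¹ * ‖x e‖)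
            = c e * ‖x e‖ := fun e => by rw [hcdef]; ring
        calc (∑ e ∈ Fv, c e * ‖x e‖) ^ 2
            = (∑ e ∈ Fv, Real.sqrt (w e) * ((Real.sqrt (edeg Hd Tl e : ℝ))⁻¹ * ‖x e‖)) ^ 2 := by
              rw [Finset.sum_congr rfl fun e _ => heq e]
          _ ≤ (∑ e ∈ Fv, Real.sqrt (w e) ^ 2) *
                ∑ e ∈ Fv, ((Real.sqrt (edeg Hd Tl e : ℝ))⁻¹ * ‖x e‖) ^ 2 := this
          _ = (vdeg Hd Tl w v) * ∑ e ∈ Fv, ((edeg Hd Tl e : ℝ))⁻¹ * ‖x e‖ ^ 2 := by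
              congr 1
              · rw [vdeg]
                exact Finset.sum_congr rfl fun e _ => Real.sq_sqrt (hw e).le
              · refine Finset.sum_congr rfl fun e _ => ?_
                rw [mul_pow, inv_pow, Real.sq_sqrt (Nat.cast_nonneg _)]
      have hsum0 : 0 ≤ ∑ e ∈ Fv, c e * ‖x e‖ :=
        Finset.sum_nonneg fun e _ => mul_nonneg
          (mul_nonneg (Real.sqrt_nonneg _) (inv_nonneg.2 (Real.sqrt_nonneg _))) (norm_nonneg _)
      calc ‖(A *ᵥ x) v‖ ^ 2 ≤ (sd v * ∑ e ∈ Fv, c e * ‖x e‖) ^ 2 := by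
            exact pow_le_pow_left₀ (norm_nonneg _) hnorm 2
        _ = sd v ^ 2 * (∑ e ∈ Fv, c e * ‖x e‖) ^ 2 := by ring
        _ ≤ sd v ^ 2 * ((vdeg Hd Tl w v) * ∑ e ∈ Fv, ((edeg Hd Tl e : ℝ))⁻¹ * ‖x e‖ ^ 2) :=
            mul_le_mul_of_nonneg_left hCS (sq_nonneg _)
        _ = ∑ e ∈ Fv, ((edeg Hd Tl e : ℝ))⁻¹ * ‖x e‖ ^ 2 := by
            rw [hsddef]
            rw [inv_pow, Real.sq_sqrt (hd v).le, ← mul_assoc,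
              inv_mul_cancel₀ (hd v).ne', one_mul]
    calc ∑ v, ‖(A *ᵥ x) v‖ ^ 2
        ≤ ∑ v, ∑ e ∈ Finset.univ.filter (fun e => v ∈ Hd e ∪ Tl e),
            ((edeg Hd Tl e : ℝ))⁻¹ * ‖x e‖ ^ 2 := Finset.sum_le_sum fun v _ => hstep v
      _ = ∑ v, ∑ e, if v ∈ Hd e ∪ Tl e then ((edeg Hd Tl e : ℝ))⁻¹ * ‖x e‖ ^ 2 else 0 := by
          exact Finset.sum_congr rfl fun v _ => (Finset.sum_filter _ _)
      _ = ∑ e, ∑ v, if v ∈ Hd e ∪ Tl e then ((edeg Hd Tl e : ℝ))⁻¹ * ‖x e‖ ^ 2 else 0 :=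
          Finset.sum_comm
      _ = ∑ e, ‖x e‖ ^ 2 := by
          refine Finset.sum_congr rfl fun e _ => ?_
          rw [← Finset.sum_filter, Finset.sum_const, Finset.filter_univ_mem]
          have hδ : (0 : ℝ) < (edeg Hd Tl e : ℝ) := by
            exact_mod_cast Finset.card_pos.2 (hne e)
          rw [edeg, nsmul_eq_mul]
          field_simp
  -- positive semidefiniteness of 1 - QN
  have hherm : ((1 : Matrix E E ℂ) - QN Hd Tl w).IsHermitian :=
    (Matrix.isHermitian_one).sub (hfact ▸ (Matrix.posSemidef_conjTranspose_mul_self A).1)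
  have hPSD : ((1 : Matrix E E ℂ) - QN Hd Tl w).PosSemidef := by
    refine Matrix.PosSemidef.of_dotProduct_mulVec_nonneg hherm fun x => ?_
    have hq : star x ⬝ᵥ (QN Hd Tl w) *ᵥ x = star (A *ᵥ x) ⬝ᵥ (A *ᵥ x) := by
      rw [hfact, ← Matrix.mulVec_mulVec, Matrix.dotProduct_mulVec,
        Matrix.vecMul_conjTranspose, star_star]
    rw [Matrix.sub_mulVec, dotProduct_sub, Matrix.one_mulVec, hq,
      star_dot_self, star_dot_self, ← Complex.ofReal_sub]
    rw [Complex.zero_le_real, sub_nonneg]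
    exact key x
  refine ⟨?_, hPSD⟩
  -- spectrum bound
  intro μ hμ
  have hμ' : μ ∈ spectrum ℂ (Matrix.toLinAlgEquiv' (QN Hd Tl w)) := by
    rwa [AlgEquiv.spectrum_eq]
  have hev : Module.End.HasEigenvalue (Matrix.toLinAlgEquiv' (QN Hd Tl w)) μ :=
    Module.End.HasEigenvalue.of_mem_spectrum hμ'
  obtain ⟨x, hx, hx0⟩ := hev.exists_hasEigenvector
  have hxe : (QN Hd Tl w) *ᵥ x = μ • x := by
    have := hx
    rwa [Module.End.mem_eigenspace_iff, Matrix.toLinAlgEquiv'_apply] at this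
  have hq := hPSD.dotProduct_mulVec_nonneg x
  rw [Matrix.sub_mulVec, dotProduct_sub, Matrix.one_mulVec, hxe,
    dotProduct_smul] at hq
  rw [star_dot_self] at hq
  set t : ℝ := ∑ i, ‖x i‖ ^ 2 with ht
  have ht0 : 0 < t := by
    have : ∃ i, x i ≠ 0 := by
      by_contra h
      push_neg at h
      exact hx0 (funext h)
    obtain ⟨i, hi⟩ := this
    exact Finset.sum_pos' (fun j _ => sq_nonneg _)
      ⟨i, Finset.mem_univ i, pow_pos (norm_pos_iff.2 hi) 2⟩
  have hz : (0 : ℂ) ≤ (1 - μ) * (t : ℂ) := by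
    have : (t : ℂ) - μ • (t : ℂ) = (1 - μ) * (t : ℂ) := by
      simp [smul_eq_mul]; ring
    rwa [this] at hq
  have hzim : ((1 - μ) * (t : ℂ)).im = (-μ.im) * t := by
    simp [Complex.mul_im]
  have hzre : ((1 - μ) * (t : ℂ)).re = (1 - μ.re) * t := by
    simp [Complex.mul_re]
  rw [Complex.le_def, hzre, hzim] at hz
  simp only [Complex.zero_re, Complex.zero_im] at hz
  obtain ⟨hre, him⟩ := hz
  have hμim : μ.im = 0 := by
    rcases mul_eq_zero.1 him.symm with h | h
    · linarith
    · exact absurd h ht0.ne'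
  refine ⟨μ.re, ?_, ?_⟩
  · rw [← Complex.re_add_im μ, hμim]; simp
  · nlinarith [hre, ht0]
end

section
/- For all distinct hyperedges i, j ∈ E, the off-diagonal entry of the Directed Line Graph Laplacian is given in scalar form by 𝕃_N(i,j) = (√(w(i))·√(w(j))/(√δ(i)·√δ(j))) · [ −Σ_{u ∈ (H(i)∩H(j)) ∪ (T(i)∩T(j))} 1/d(u) + i·( Σ_{u ∈ H(i)∩T(j)} 1/d(u) − Σ_{u ∈ T(i)∩H(j)} 1/d(u) ) ]. -/
open Matrix Finset

variable {V E : Type*}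

/-- The off-diagonal entries of the Directed Line Graph Laplacian in scalar form. -/
theorem stmt10 {V E : Type*} [Fintype V] [Fintype E] [DecidableEq V] [DecidableEq E]
    (Hd Tl : E → Finset V)
    (hdisj : ∀ e, Disjoint (Hd e) (Tl e))
    (hne : ∀ e, (Hd e ∪ Tl e).Nonempty)
    (w : E → ℝ) (hw : ∀ e, 0 < w e)
    (hd : ∀ u, 0 < vdeg Hd Tl w u)
    (i j : E) (hij : i ≠ j) :
    LN Hd Tl w i j =
      ((Real.sqrt (w i) * Real.sqrt (w j) /
          (Real.sqrt (edeg Hd Tl i : ℝ) * Real.sqrt (edeg Hd Tl j : ℝ)) : ℝ) : ℂ) *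
        (-((∑ u ∈ (Hd i ∩ Hd j) ∪ (Tl i ∩ Tl j), 1 / vdeg Hd Tl w u : ℝ) : ℂ) +
          Complex.I *
            (((∑ u ∈ Hd i ∩ Tl j, 1 / vdeg Hd Tl w u) -
              ∑ u ∈ Tl i ∩ Hd j, 1 / vdeg Hd Tl w u : ℝ) : ℂ)) := by
  classical
  set d : V → ℂ := fun u => (((vdeg Hd Tl w u)⁻¹ : ℝ) : ℂ) with hd'
  have key : ∀ u : V,
      star (incB Hd Tl u i) * d u * incB Hd Tl u j =
        (if u ∈ (Hd i ∩ Hd j) ∪ (Tl i ∩ Tl j) then d u else 0)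
        + (-Complex.I) * (if u ∈ Hd i ∩ Tl j then d u else 0)
        + Complex.I * (if u ∈ Tl i ∩ Hd j then d u else 0) := by
    intro u
    have h1 : ¬(u ∈ Hd i ∧ u ∈ Tl i) := fun ⟨a, b⟩ => Finset.disjoint_left.mp (hdisj i) a b
    have h2 : ¬(u ∈ Hd j ∧ u ∈ Tl j) := fun ⟨a, b⟩ => Finset.disjoint_left.mp (hdisj j) a b
    simp only [incB, Matrix.of_apply, Finset.mem_union, Finset.mem_inter]
    by_cases hi1 : u ∈ Hd i <;> by_cases hi2 : u ∈ Tl i <;>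
      by_cases hj1 : u ∈ Hd j <;> by_cases hj2 : u ∈ Tl j <;>
      simp_all <;> ring_nf <;> simp [Complex.I_sq] <;> ring
  have hQ : QN Hd Tl w i j =
      (((Real.sqrt ((edeg Hd Tl i : ℕ) : ℝ))⁻¹ : ℝ) : ℂ) * ((Real.sqrt (w i) : ℝ) : ℂ) *
      (∑ u, star (incB Hd Tl u i) * d u * incB Hd Tl u j) *
      ((Real.sqrt (w j) : ℝ) : ℂ) * (((Real.sqrt ((edeg Hd Tl j : ℕ) : ℝ))⁻¹ : ℝ) : ℂ) := by
    simp only [QN, hd']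
    rw [Matrix.mul_diagonal, Matrix.mul_diagonal, Matrix.mul_apply]
    simp only [Matrix.mul_diagonal, Matrix.diagonal_mul_diagonal, Matrix.diagonal_mul,
      Matrix.conjTranspose_apply, Finset.sum_mul, Finset.mul_sum]
    apply Finset.sum_congr rfl
    intro u _
    ring
  have hL : LN Hd Tl w i j = -(QN Hd Tl w i j) := by
    simp [LN, Matrix.sub_apply, Matrix.one_apply_ne hij]
  rw [hL, hQ]
  have hsum : (∑ u, star (incB Hd Tl u i) * d u * incB Hd Tl u j) =
      (∑ u ∈ (Hd i ∩ Hd j) ∪ (Tl i ∩ Tl j), d u)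
      + (-Complex.I) * (∑ u ∈ Hd i ∩ Tl j, d u)
      + Complex.I * (∑ u ∈ Tl i ∩ Hd j, d u) := by
    rw [Finset.sum_congr rfl (fun u _ => key u)]
    rw [Finset.sum_add_distrib, Finset.sum_add_distrib, ← Finset.mul_sum, ← Finset.mul_sum]
    congr 1
    · congr 1
      · rw [Finset.sum_ite_mem, Finset.univ_inter]
      · congr 1; rw [Finset.sum_ite_mem, Finset.univ_inter]
    · congr 1; rw [Finset.sum_ite_mem, Finset.univ_inter]
  rw [hsum, hd']
  push_cast
  simp only [one_div]
  ring
end
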